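/- Let D ∈ ℂ[t] be a nonconstant polynomial such that the number of distinct complex roots of D is at most (1/2)·deg D. Then the polynomial Pell equation X² - D·Y² = 1 has no solutions X, Y ∈ ℂ[t] with Y ≠ 0. -/

import Mathlib

open Polynomial UniqueFactorizationMonoid

private lemma my_radical_dvd_radical {a b : Polynomial ℂ} (ha : a ≠ 0) (hb : b ≠ 0)
    (h : a ∣ b) : radical a ∣ radical b := by
  unfold radical primeFactors
  apply Finset.prod_dvd_prod_of_subset
  intro p hp
  simp only [Multiset.mem_toFinset] at hp ⊢
  exact Multiset.mem_of_le
    ((dvd_iff_normalizedFactors_le_normalizedFactors ha hb).mp h) hp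

private lemma radical_natDegree_le {P : Polynomial ℂ} (hP : P ≠ 0) :
    (radical P).natDegree ≤ P.roots.toFinset.card := by
  have key : ∀ r ∈ primeFactors P, r = Polynomial.X + Polynomial.C (r.coeff 0) := by
    intro r hr
    have hrf : r ∈ normalizedFactors P := mem_primeFactors.mp hr
    have hirr : Irreducible r := irreducible_of_normalized_factor r hrf
    have hmon : r.Monic := by
      have h := normalize_normalized_factor r hrf
      rw [← h]; exact monic_normalize hirr.ne_zero
    have hd1 : r.natDegree = 1 :=
      Polynomial.natDegree_eq_of_degree_eq_some
        (IsAlgClosed.degree_eq_one_of_irreducible ℂ hirr)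
    have hp1 : r.coeff 1 = 1 := by
      have h := hmon.leadingCoeff
      rwa [Polynomial.leadingCoeff, hd1] at h
    have heq : r = Polynomial.C (r.coeff 1) * Polynomial.X + Polynomial.C (r.coeff 0) :=
      r.eq_X_add_C_of_natDegree_le_one hd1.le
    conv_lhs => rw [heq]
    rw [hp1, map_one, one_mul]
  have hdeg : (radical P).natDegree = (primeFactors P).card := by
    rw [radical, natDegree_prod _ _ (fun p hp => ?_)]
    · rw [Finset.sum_congr rfl (fun p hp => ?_), Finset.sum_const, smul_eq_mul, mul_one]
      exact Polynomial.natDegree_eq_of_degree_eq_some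
        (IsAlgClosed.degree_eq_one_of_irreducible ℂ
          (irreducible_of_normalized_factor p (mem_primeFactors.mp hp)))
    · exact (irreducible_of_normalized_factor p (mem_primeFactors.mp hp)).ne_zero
  rw [hdeg]
  apply Finset.card_le_card_of_injOn (fun p => -(p.coeff 0))
  · intro p hp
    have hpf : p ∈ normalizedFactors P := mem_primeFactors.mp hp
    have hroot : p.IsRoot (-(p.coeff 0)) := by
      conv_lhs => rw [key p hp]
      simp
    have : P.IsRoot (-(p.coeff 0)) := by
      obtain ⟨q, hq⟩ := dvd_of_mem_normalizedFactors hpf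
      rw [hq, Polynomial.IsRoot, Polynomial.eval_mul, hroot, zero_mul]
    simp only [Finset.mem_coe, Multiset.mem_toFinset]
    exact (Polynomial.mem_roots hP).mpr this
  · intro p hp q hq hpq
    simp only [neg_inj] at hpq
    rw [key p hp, key q hq, hpq]

theorem stmt_18 (D : Polynomial ℂ) (hD : 1 ≤ D.natDegree)
    (hroots : 2 * D.roots.toFinset.card ≤ D.natDegree) :
    ¬ ∃ x y : Polynomial ℂ, y ≠ 0 ∧ x ^ 2 - D * y ^ 2 = 1 := by
  rintro ⟨x, y, hy, heq⟩
  have hDne : D ≠ 0 := fun h => by simp [h] at hD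
  have hDy2 : D * y ^ 2 ≠ 0 := mul_ne_zero hDne (pow_ne_zero 2 hy)
  have hx : x ≠ 0 := by
    rintro rfl
    have : -(D * y ^ 2) = 1 := by linear_combination heq
    have hdeg : (D * y ^ 2).natDegree = 0 := by
      have := congrArg Polynomial.natDegree this
      simpa using this
    rw [Polynomial.natDegree_mul hDne (pow_ne_zero 2 hy)] at hdeg
    omega
  set a : Polynomial ℂ := x ^ 2 with ha_def
  set b : Polynomial ℂ := -(D * y ^ 2) with hb_def
  set c : Polynomial ℂ := -1 with hc_def
  have ha : a ≠ 0 := pow_ne_zero 2 hx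
  have hb : b ≠ 0 := neg_ne_zero.mpr hDy2
  have hc : c ≠ 0 := by simp [hc_def]
  have hsum : a + b + c = 0 := by rw [ha_def, hb_def, hc_def]; linear_combination heq
  have hab : IsCoprime a b := ⟨1, 1, by rw [ha_def, hb_def]; linear_combination heq⟩
  have hbc : IsCoprime b c := (isCoprime_one_right (x := b)).neg_right
  have hca : IsCoprime c a := (isCoprime_one_left (x := a)).neg_left
  -- degree relation: 2 deg x = deg D + 2 deg y
  have hdegx : 2 * x.natDegree = D.natDegree + 2 * y.natDegree := by
    have h1 : x ^ 2 = 1 + D * y ^ 2 := by linear_combination heq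
    have hd2 : (D * y ^ 2).natDegree = D.natDegree + 2 * y.natDegree := by
      rw [Polynomial.natDegree_mul hDne (pow_ne_zero 2 hy), Polynomial.natDegree_pow]
    have h3 : (1 + D * y ^ 2).natDegree = D.natDegree + 2 * y.natDegree := by
      rw [Polynomial.natDegree_add_eq_right_of_natDegree_lt (by rw [Polynomial.natDegree_one, hd2]; omega), hd2]
    calc 2 * x.natDegree = (x ^ 2).natDegree := by rw [Polynomial.natDegree_pow]
      _ = D.natDegree + 2 * y.natDegree := by rw [h1, h3]
  rcases Polynomial.abc ha hb hc hab hsum with ⟨_, hB, _⟩ | ⟨_, hb', _⟩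
  · -- main case: degree inequality from Mason-Stothers
    have hbdeg : b.natDegree = D.natDegree + 2 * y.natDegree := by
      rw [hb_def, Polynomial.natDegree_neg,
        Polynomial.natDegree_mul hDne (pow_ne_zero 2 hy), Polynomial.natDegree_pow]
    have habc_eq : a * b * c = x ^ 2 * (D * y ^ 2) := by
      rw [ha_def, hb_def, hc_def]; ring
    have hdvd : x ^ 2 * (D * y ^ 2) ∣ (x * D * y) ^ 2 :=
      ⟨D, by ring⟩
    have hxDy : x * D * y ≠ 0 := mul_ne_zero (mul_ne_zero hx hDne) hy
    have hxDy2 : (x * D * y) ^ 2 ≠ 0 := pow_ne_zero 2 hxDy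
    have hrad1 : radical (a * b * c) ∣ radical (x * D * y) := by
      rw [habc_eq]
      have := my_radical_dvd_radical (mul_ne_zero ha hDy2) hxDy2 hdvd
      rwa [radical_pow _ (by norm_num : 2 ≠ 0)] at this
    have hrd : (radical (a * b * c)).natDegree ≤ (radical (x * D * y)).natDegree :=
      Polynomial.natDegree_le_of_dvd hrad1 radical_ne_zero
    have hrd2 : (radical (x * D * y)).natDegree ≤ (x * D * y).roots.toFinset.card :=
      radical_natDegree_le hxDy
    have hru : (x * D * y).roots.toFinset.card ≤
        x.roots.toFinset.card + D.roots.toFinset.card + y.roots.toFinset.card := by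
      have hxD : x * D ≠ 0 := mul_ne_zero hx hDne
      rw [Polynomial.roots_mul hxDy, Polynomial.roots_mul hxD]
      calc ((x.roots + D.roots) + y.roots).toFinset.card
          ≤ ((x.roots + D.roots).toFinset ∪ y.roots.toFinset).card := by
            rw [Multiset.toFinset_add]
        _ ≤ (x.roots + D.roots).toFinset.card + y.roots.toFinset.card :=
            Finset.card_union_le _ _
        _ ≤ x.roots.toFinset.card + D.roots.toFinset.card + y.roots.toFinset.card := by
            rw [Multiset.toFinset_add]
            exact Nat.add_le_add_right (Finset.card_union_le _ _) _
    have hxr : x.roots.toFinset.card ≤ x.natDegree := by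
      calc x.roots.toFinset.card ≤ Multiset.card x.roots := Multiset.toFinset_card_le _
        _ ≤ x.natDegree := Polynomial.card_roots' x
    have hyr : y.roots.toFinset.card ≤ y.natDegree := by
      calc y.roots.toFinset.card ≤ Multiset.card y.roots := Multiset.toFinset_card_le _
        _ ≤ y.natDegree := Polynomial.card_roots' y
    omega
  · -- derivative case
    have : (D * y ^ 2).natDegree = 0 := by
      apply Polynomial.natDegree_eq_zero_of_derivative_eq_zero
      have : Polynomial.derivative b = -Polynomial.derivative (D * y ^ 2) := by
        rw [hb_def, map_neg]
      rw [this] at hb'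
      exact neg_eq_zero.mp hb'
    rw [Polynomial.natDegree_mul hDne (pow_ne_zero 2 hy)] at this
    omega
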